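/- Let K ≥ 1 and M ≥ K+5 be integers. Suppose B_D : ℤ → ℤ satisfies: B_D(n)=0 for all n ≤ 0; B_D(1),...,B_D(K) are arbitrary integers; B_D(K+1)=2, B_D(K+2)=M, B_D(K+3)=2; and B_D(n) = B_D(n−B_D(n−1)) + B_D(n−B_D(n−2)) + B_D(n−B_D(n−3)) for all n > K+3. Then for every integer k ≥ 1, B_D(K+2k) = 2^{k−1}·M, and for every integer k ≥ 0, B_D(K+2k+1) = 2. -/

import Mathlib

theorem lemma_2cyc (K M : ℤ) (hK : 1 ≤ K) (hM : K + 5 ≤ M)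
    (f : ℤ → ℤ)
    (h0 : ∀ n : ℤ, n ≤ 0 → f n = 0)
    (h1 : f (K + 1) = 2) (h2 : f (K + 2) = M) (h3 : f (K + 3) = 2)
    (hrec : ∀ n : ℤ, K + 3 < n →
      f n = f (n - f (n - 1)) + f (n - f (n - 2)) + f (n - f (n - 3))) :
    (∀ k : ℕ, 1 ≤ k → f (K + 2 * (k : ℤ)) = 2 ^ (k - 1) * M) ∧
    (∀ k : ℕ, f (K + 2 * (k : ℤ) + 1) = 2) := by
  have hMpos : (0:ℤ) < M := by linarith
  have hpow : ∀ m : ℕ, (K + 2 * (m:ℤ) + 5 : ℤ) ≤ 2 ^ m * M := by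
    intro m
    have h2p : ((m:ℤ) + 1) ≤ 2 ^ m := by exact_mod_cast @Nat.lt_two_pow_self m
    have hm0 : (0:ℤ) ≤ (m:ℤ) := Int.natCast_nonneg m
    nlinarith [mul_le_mul_of_nonneg_right h2p hMpos.le]
  have key : ∀ k : ℕ, (1 ≤ k → f (K + 2 * (k : ℤ)) = 2 ^ (k - 1) * M) ∧
      f (K + 2 * (k : ℤ) + 1) = 2 := by
    intro k
    induction k using Nat.strong_induction_on with
    | _ k ih =>
      rcases k with _ | _ | m
      · refine ⟨by omega, ?_⟩
        have : K + 2 * ((0:ℕ):ℤ) + 1 = K + 1 := by push_cast; ring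
        rw [this, h1]
      · constructor
        · intro _
          have : K + 2 * ((1:ℕ):ℤ) = K + 2 := by push_cast; ring
          rw [this, h2]; norm_num
        · have : K + 2 * ((1:ℕ):ℤ) + 1 = K + 3 := by push_cast; ring
          rw [this, h3]
      · -- k = m + 2
        have hm0 : (0:ℤ) ≤ (m:ℤ) := Int.natCast_nonneg m
        have ihm := (ih m (by omega)).2
        have ihm1 := ih (m+1) (by omega)
        -- f (K + 2m + 1) = 2
        have e1 : f (K + 2 * (m:ℤ) + 1) = 2 := ihm
        -- f (K + 2m + 3) = 2
        have e3 : f (K + 2 * (m:ℤ) + 3) = 2 := by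
          have := ihm1.2
          have harg : K + 2 * ((m+1:ℕ):ℤ) + 1 = K + 2 * (m:ℤ) + 3 := by push_cast; ring
          rwa [harg] at this
        -- f (K + 2m + 2) = 2^m * M
        have e2 : f (K + 2 * (m:ℤ) + 2) = 2 ^ m * M := by
          have := ihm1.1 (by omega)
          simp only [Nat.add_sub_cancel] at this
          have harg : K + 2 * ((m+1:ℕ):ℤ) = K + 2 * (m:ℤ) + 2 := by push_cast; ring
          rwa [harg] at this
        have hz1 : f (K + 2 * (m:ℤ) + 4 - 2 ^ m * M) = 0 := by
          apply h0; have := hpow m; linarith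
        have hz2 : f (K + 2 * (m:ℤ) + 5 - 2 ^ m * M) = 0 := by
          apply h0; have := hpow m; linarith
        have hz3 : f (K + 2 * (m:ℤ) + 5 - 2 ^ (m+1) * M) = 0 := by
          apply h0
          have := hpow m
          have hp : (0:ℤ) < 2 ^ m * M := by positivity
          have : (2:ℤ) ^ (m+1) * M = 2 * (2 ^ m * M) := by ring
          linarith [hpow m, hp]
        -- first part: f (K + 2m + 4) = 2^(m+1) * M
        have eA : f (K + 2 * (m:ℤ) + 4) = 2 ^ (m+1) * M := by
          have r1 := hrec (K + 2 * (m:ℤ) + 4) (by linarith)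
          rw [show K + 2 * (m:ℤ) + 4 - 1 = K + 2 * (m:ℤ) + 3 from by ring,
              show K + 2 * (m:ℤ) + 4 - 2 = K + 2 * (m:ℤ) + 2 from by ring,
              show K + 2 * (m:ℤ) + 4 - 3 = K + 2 * (m:ℤ) + 1 from by ring,
              e1, e2, e3] at r1
          rw [show K + 2 * (m:ℤ) + 4 - 2 = K + 2 * (m:ℤ) + 2 from by ring, e2] at r1
          rw [r1, hz1]; ring
        -- second part: f (K + 2m + 5) = 2
        have eB : f (K + 2 * (m:ℤ) + 5) = 2 := by
          have r2 := hrec (K + 2 * (m:ℤ) + 5) (by linarith)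
          rw [show K + 2 * (m:ℤ) + 5 - 1 = K + 2 * (m:ℤ) + 4 from by ring,
              show K + 2 * (m:ℤ) + 5 - 2 = K + 2 * (m:ℤ) + 3 from by ring,
              show K + 2 * (m:ℤ) + 5 - 3 = K + 2 * (m:ℤ) + 2 from by ring,
              eA, e2, e3] at r2
          rw [show K + 2 * (m:ℤ) + 5 - 2 = K + 2 * (m:ℤ) + 3 from by ring, e3] at r2
          rw [r2, hz2, hz3]; ring
        constructor
        · intro _
          have harg : K + 2 * ((m+2:ℕ):ℤ) = K + 2 * (m:ℤ) + 4 := by push_cast; ring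
          have hexp : (m + 2) - 1 = m + 1 := by omega
          rw [harg, hexp, eA]
        · have harg : K + 2 * ((m+2:ℕ):ℤ) + 1 = K + 2 * (m:ℤ) + 5 := by push_cast; ring
          rw [harg, eB]
  exact ⟨fun k hk => (key k).1 hk, fun k => (key k).2⟩
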